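/- For r = 1 and k = 0, the constant C_{b_1,b_j}^{0,0} equals (2b_1 + 2b_j − 1)!!, i.e., the double factorial of 2b_1 + 2b_j − 1, for all nonnegative integers b_1, b_j with b_1 + b_j ≥ 1. -/

import Mathlib

open Polynomial MvPolynomial

/-- `xiOne n` is the auxiliary polynomial `ξ_{n+1}^{1,0}` for `r = 1`, `k = 0`:
`ξ_1(t) = t^2(t-1)` and `ξ_{m+1}(t) = t^2(t-1) (d/dt) ξ_m(t)`. -/
noncomputable def xiOne : ℕ → Polynomial ℤ
  | 0 => Polynomial.X ^ 2 * (Polynomial.X - 1)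
  | n + 1 => Polynomial.X ^ 2 * (Polynomial.X - 1) * Polynomial.derivative (xiOne n)

lemma xiOne_natDegree_le (n : ℕ) : (xiOne n).natDegree ≤ 2 * n + 3 := by
  induction n with
  | zero =>
    show (Polynomial.X ^ 2 * (Polynomial.X - 1) : Polynomial ℤ).natDegree ≤ 3
    refine le_trans Polynomial.natDegree_mul_le ?_
    have h1 : (Polynomial.X ^ 2 : Polynomial ℤ).natDegree = 2 := Polynomial.natDegree_X_pow 2
    have h2 : (Polynomial.X - 1 : Polynomial ℤ).natDegree = 1 := by
      simpa using Polynomial.natDegree_X_sub_C (1 : ℤ)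
    omega
  | succ n ih =>
    show (Polynomial.X ^ 2 * (Polynomial.X - 1) * Polynomial.derivative (xiOne n)).natDegree
      ≤ 2 * (n + 1) + 3
    refine le_trans Polynomial.natDegree_mul_le ?_
    have h1 : (Polynomial.X ^ 2 * (Polynomial.X - 1) : Polynomial ℤ).natDegree ≤ 3 := by
      refine le_trans Polynomial.natDegree_mul_le ?_
      have h1 : (Polynomial.X ^ 2 : Polynomial ℤ).natDegree = 2 := Polynomial.natDegree_X_pow 2
      have h2 : (Polynomial.X - 1 : Polynomial ℤ).natDegree = 1 := by
        simpa using Polynomial.natDegree_X_sub_C (1 : ℤ)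
      omega
    have h2 : (Polynomial.derivative (xiOne n)).natDegree ≤ (xiOne n).natDegree - 1 :=
      Polynomial.natDegree_derivative_le _
    omega

lemma xiOne_coeff_zero {n k : ℕ} (hk : 2 * n + 3 < k) : (xiOne n).coeff k = 0 :=
  Polynomial.coeff_eq_zero_of_natDegree_lt (lt_of_le_of_lt (xiOne_natDegree_le n) hk)

lemma xiOne_coeff_top (n : ℕ) :
    (xiOne n).coeff (2 * n + 3) = (Nat.doubleFactorial (2 * n + 1) : ℤ) := by
  induction n with
  | zero =>
    have e : (xiOne 0 : Polynomial ℤ) = Polynomial.X ^ 3 - Polynomial.X ^ 2 := by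
      show (Polynomial.X ^ 2 * (Polynomial.X - 1) : Polynomial ℤ) = _
      ring
    rw [e]
    simp [Polynomial.coeff_sub, Polynomial.coeff_X_pow, Nat.doubleFactorial]
  | succ n ih =>
    have e : xiOne (n + 1) =
        Polynomial.X ^ 3 * Polynomial.derivative (xiOne n)
          - Polynomial.X ^ 2 * Polynomial.derivative (xiOne n) := by
      show Polynomial.X ^ 2 * (Polynomial.X - 1) * Polynomial.derivative (xiOne n) = _
      ring
    have h3 : (Polynomial.X ^ 3 * Polynomial.derivative (xiOne n)).coeff (2 * (n+1) + 3)
        = (Polynomial.derivative (xiOne n)).coeff (2 * n + 2) := by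
      have := Polynomial.coeff_X_pow_mul (Polynomial.derivative (xiOne n)) 3 (2 * n + 2)
      convert this using 2
      omega
    have h2 : (Polynomial.X ^ 2 * Polynomial.derivative (xiOne n)).coeff (2 * (n+1) + 3)
        = (Polynomial.derivative (xiOne n)).coeff (2 * n + 3) := by
      have := Polynomial.coeff_X_pow_mul (Polynomial.derivative (xiOne n)) 2 (2 * n + 3)
      convert this using 2
      omega
    rw [e, Polynomial.coeff_sub, h3, h2, Polynomial.coeff_derivative,
      Polynomial.coeff_derivative]
    rw [show 2 * n + 2 + 1 = 2 * n + 3 from rfl, ih,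
      xiOne_coeff_zero (by omega : 2 * n + 3 < 2 * n + 3 + 1)]
    have hdf : Nat.doubleFactorial (2 * (n + 1) + 1)
        = (2 * n + 3) * Nat.doubleFactorial (2 * n + 1) := by
      have := Nat.doubleFactorial_add_two (2 * n + 1)
      convert this using 2
      omega
    rw [hdf]
    push_cast
    ring

/-- Explicit quotient of `p(X 0) - p(X 1)` by `X 0 - X 1`. -/
noncomputable def gq (N : ℕ) (p : Polynomial ℤ) : MvPolynomial (Fin 2) ℤ :=
  ∑ k ∈ Finset.range N, MvPolynomial.C (p.coeff k) *
    ∑ i ∈ Finset.range k, MvPolynomial.X 0 ^ i * MvPolynomial.X 1 ^ (k - 1 - i)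

lemma gq_spec (N : ℕ) (p : Polynomial ℤ) (hN : p.natDegree < N) :
    Polynomial.aeval (MvPolynomial.X (0 : Fin 2)) p
      - Polynomial.aeval (MvPolynomial.X (1 : Fin 2)) p
    = (MvPolynomial.X 0 - MvPolynomial.X 1) * gq N p := by
  rw [Polynomial.aeval_eq_sum_range' hN, Polynomial.aeval_eq_sum_range' hN,
    ← Finset.sum_sub_distrib, gq, Finset.mul_sum]
  refine Finset.sum_congr rfl fun k _ => ?_
  rw [← smul_sub, ← geom_sum₂_mul (MvPolynomial.X (0 : Fin 2)) (MvPolynomial.X 1) k,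
    MvPolynomial.smul_eq_C_mul]
  ring

lemma coeff_pow_pow (a b i j : ℕ) :
    MvPolynomial.coeff (Finsupp.single (0 : Fin 2) a + Finsupp.single 1 b)
      ((MvPolynomial.X 0 : MvPolynomial (Fin 2) ℤ) ^ i * MvPolynomial.X 1 ^ j)
    = if i = a ∧ j = b then 1 else 0 := by
  rw [MvPolynomial.X_pow_eq_monomial, MvPolynomial.X_pow_eq_monomial,
    MvPolynomial.monomial_mul, MvPolynomial.coeff_monomial]
  by_cases hij : i = a ∧ j = b
  · rw [if_pos hij, if_pos (by rw [hij.1, hij.2]), mul_one]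
  · rw [if_neg hij, if_neg]
    intro heq
    have h0 := DFunLike.congr_fun heq (0 : Fin 2)
    have h1 := DFunLike.congr_fun heq (1 : Fin 2)
    simp [Finsupp.single_apply, Finsupp.add_apply,
      show (1 : Fin 2) ≠ 0 from by decide, show (0 : Fin 2) ≠ 1 from by decide] at h0 h1
    exact hij ⟨h0, h1⟩

lemma coeff_gq (N : ℕ) (p : Polynomial ℤ) (hN : p.natDegree < N) (a b : ℕ) :
    MvPolynomial.coeff (Finsupp.single (0 : Fin 2) a + Finsupp.single 1 b) (gq N p)
    = p.coeff (a + b + 1) := by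
  rw [gq, MvPolynomial.coeff_sum]
  have inner : ∀ k : ℕ,
      (∑ i ∈ Finset.range k, MvPolynomial.coeff
        (Finsupp.single (0 : Fin 2) a + Finsupp.single 1 b)
        ((MvPolynomial.X 0 : MvPolynomial (Fin 2) ℤ) ^ i * MvPolynomial.X 1 ^ (k - 1 - i)))
      = if k = a + b + 1 then 1 else 0 := by
    intro k
    simp only [coeff_pow_pow]
    split_ifs with hk
    · subst hk
      rw [Finset.sum_eq_single a]
      · rw [if_pos ⟨rfl, by omega⟩]
      · intro i hi hne
        rw [if_neg]
        rintro ⟨rfl, -⟩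
        exact hne rfl
      · intro ha
        exact absurd (Finset.mem_range.mpr (by omega)) ha
    · refine Finset.sum_eq_zero fun i hi => ?_
      rw [Finset.mem_range] at hi
      rw [if_neg]
      rintro ⟨rfl, hb⟩
      exact hk (by omega)
  calc (∑ k ∈ Finset.range N, MvPolynomial.coeff
          (Finsupp.single (0 : Fin 2) a + Finsupp.single 1 b)
          (MvPolynomial.C (p.coeff k) *
            ∑ i ∈ Finset.range k, MvPolynomial.X 0 ^ i * MvPolynomial.X 1 ^ (k - 1 - i)))
      = ∑ k ∈ Finset.range N, if k = a + b + 1 then p.coeff k else 0 := by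
        refine Finset.sum_congr rfl fun k _ => ?_
        rw [MvPolynomial.coeff_C_mul, MvPolynomial.coeff_sum, inner k]
        split_ifs <;> simp
    _ = p.coeff (a + b + 1) := by
        rw [Finset.sum_ite_eq' (Finset.range N) (a + b + 1) (fun k => p.coeff k)]
        split_ifs with hmem
        · rfl
        · rw [Finset.mem_range, not_lt] at hmem
          exact (Polynomial.coeff_eq_zero_of_natDegree_lt (by omega)).symm

lemma coeff_X1_pow (a b k : ℕ) (ha : a ≠ 0) :
    MvPolynomial.coeff (Finsupp.single (0 : Fin 2) a + Finsupp.single 1 b)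
      ((MvPolynomial.X 1 : MvPolynomial (Fin 2) ℤ) ^ k) = 0 := by
  rw [MvPolynomial.X_pow_eq_monomial, MvPolynomial.coeff_monomial, if_neg]
  intro heq
  have h0 := DFunLike.congr_fun heq (0 : Fin 2)
  simp [Finsupp.single_apply, Finsupp.add_apply,
    show (1 : Fin 2) ≠ 0 from by decide, show (0 : Fin 2) ≠ 1 from by decide] at h0
  exact ha h0.symm

lemma coeff_aeval_X1 (p : Polynomial ℤ) (a b : ℕ) (ha : a ≠ 0) :
    MvPolynomial.coeff (Finsupp.single (0 : Fin 2) a + Finsupp.single 1 b)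
      (Polynomial.aeval (MvPolynomial.X (1 : Fin 2) : MvPolynomial (Fin 2) ℤ) p) = 0 := by
  rw [Polynomial.aeval_eq_sum_range' (Nat.lt_succ_self p.natDegree), MvPolynomial.coeff_sum]
  refine Finset.sum_eq_zero fun k _ => ?_
  rw [MvPolynomial.coeff_smul, coeff_X1_pow a b k ha, smul_zero]

/-- For `r = 1` (so `k₁ = k_j = 0`), the constant `C_{b₁,b_j}^{0,0}` — defined as the
coefficient of `t_i^{2b₁+2} t_j^{2b_j+1}` in
`(t_i^2(t_j-1) ξ_{m+1}(t_i) - t_j^2(t_i-1) ξ_{m+1}(t_j))/(t_i - t_j)` with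
`m = b₁ + b_j - 1` — equals `(2b₁ + 2b_j - 1)!!`. -/
theorem stmt3 (b₁ bj : ℕ) (h : 1 ≤ b₁ + bj) :
    ∃ Q : MvPolynomial (Fin 2) ℤ,
      (MvPolynomial.X 0) ^ 2 * (MvPolynomial.X 1 - 1) *
          (Polynomial.aeval (MvPolynomial.X (0 : Fin 2)) (xiOne (b₁ + bj - 1))) -
        (MvPolynomial.X 1) ^ 2 * (MvPolynomial.X 0 - 1) *
          (Polynomial.aeval (MvPolynomial.X (1 : Fin 2)) (xiOne (b₁ + bj - 1))) =
        (MvPolynomial.X 0 - MvPolynomial.X 1) * Q ∧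
      MvPolynomial.coeff
          (Finsupp.single (0 : Fin 2) (2 * b₁ + 2) + Finsupp.single (1 : Fin 2) (2 * bj + 1)) Q =
        (Nat.doubleFactorial (2 * b₁ + 2 * bj - 1) : ℤ) := by
  set m := b₁ + bj - 1 with hm
  set ξ := xiOne m with hξ
  set A : Polynomial ℤ := Polynomial.X ^ 2 * ξ with hAdef
  have hdeg : A.natDegree ≤ 2 * m + 5 := by
    refine le_trans Polynomial.natDegree_mul_le ?_
    have h1 : (Polynomial.X ^ 2 : Polynomial ℤ).natDegree = 2 := Polynomial.natDegree_X_pow 2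
    have h2 := xiOne_natDegree_le m
    rw [← hξ] at h2
    omega
  have hgq := gq_spec (2 * m + 6) A (by omega)
  have e0 : Polynomial.aeval (MvPolynomial.X (0 : Fin 2)) A
      = (MvPolynomial.X 0 : MvPolynomial (Fin 2) ℤ) ^ 2
        * Polynomial.aeval (MvPolynomial.X (0 : Fin 2)) ξ := by
    rw [hAdef, map_mul, map_pow, Polynomial.aeval_X]
  have e1 : Polynomial.aeval (MvPolynomial.X (1 : Fin 2)) A
      = (MvPolynomial.X 1 : MvPolynomial (Fin 2) ℤ) ^ 2
        * Polynomial.aeval (MvPolynomial.X (1 : Fin 2)) ξ := by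
    rw [hAdef, map_mul, map_pow, Polynomial.aeval_X]
  rw [e0, e1] at hgq
  refine ⟨(MvPolynomial.X 1 - 1) * gq (2 * m + 6) A
      - (MvPolynomial.X 1) ^ 2 * Polynomial.aeval (MvPolynomial.X (1 : Fin 2)) ξ, ?_, ?_⟩
  · linear_combination (MvPolynomial.X (1 : Fin 2) - 1) * hgq
  · have hd : Finsupp.single (0 : Fin 2) (2 * b₁ + 2) + Finsupp.single (1 : Fin 2) (2 * bj + 1)
        = Finsupp.single (1 : Fin 2) 1
          + (Finsupp.single (0 : Fin 2) (2 * b₁ + 2) + Finsupp.single (1 : Fin 2) (2 * bj)) := by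
      ext x
      fin_cases x <;> simp [Finsupp.single_apply] <;> omega
    have cX : MvPolynomial.coeff
        (Finsupp.single (0 : Fin 2) (2 * b₁ + 2) + Finsupp.single (1 : Fin 2) (2 * bj + 1))
        (MvPolynomial.X 1 * gq (2 * m + 6) A) = A.coeff (2 * b₁ + 2 + 2 * bj + 1) := by
      rw [hd, MvPolynomial.coeff_X_mul, coeff_gq (2 * m + 6) A (by omega)]
    have cg : MvPolynomial.coeff
        (Finsupp.single (0 : Fin 2) (2 * b₁ + 2) + Finsupp.single (1 : Fin 2) (2 * bj + 1))
        (gq (2 * m + 6) A) = A.coeff (2 * b₁ + 2 + (2 * bj + 1) + 1) :=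
      coeff_gq (2 * m + 6) A (by omega) _ _
    have c2 : MvPolynomial.coeff
        (Finsupp.single (0 : Fin 2) (2 * b₁ + 2) + Finsupp.single (1 : Fin 2) (2 * bj + 1))
        ((MvPolynomial.X 1 : MvPolynomial (Fin 2) ℤ) ^ 2
          * Polynomial.aeval (MvPolynomial.X (1 : Fin 2)) ξ) = 0 := by
      have := coeff_aeval_X1 A (2 * b₁ + 2) (2 * bj + 1) (by omega)
      rw [e1] at this
      exact this
    have hsplit : (MvPolynomial.X 1 - 1 : MvPolynomial (Fin 2) ℤ) * gq (2 * m + 6) A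
        - (MvPolynomial.X 1) ^ 2 * Polynomial.aeval (MvPolynomial.X (1 : Fin 2)) ξ
        = MvPolynomial.X 1 * gq (2 * m + 6) A - gq (2 * m + 6) A
          - (MvPolynomial.X 1) ^ 2 * Polynomial.aeval (MvPolynomial.X (1 : Fin 2)) ξ := by
      ring
    rw [hsplit, MvPolynomial.coeff_sub, MvPolynomial.coeff_sub, cX, cg, c2]
    have hz : A.coeff (2 * b₁ + 2 + (2 * bj + 1) + 1) = 0 :=
      Polynomial.coeff_eq_zero_of_natDegree_lt (by omega)
    have htop : A.coeff (2 * b₁ + 2 + 2 * bj + 1) = (Nat.doubleFactorial (2 * m + 1) : ℤ) := by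
      rw [hAdef]
      have := Polynomial.coeff_X_pow_mul ξ 2 (2 * m + 3)
      rw [show 2 * b₁ + 2 + 2 * bj + 1 = 2 * m + 3 + 2 from by omega, this, hξ, xiOne_coeff_top]
    rw [hz, htop]
    have hmn : 2 * m + 1 = 2 * b₁ + 2 * bj - 1 := by omega
    rw [hmn]
    ring
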